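/- One-way proportional covariation minimizes the I-divergence: with P = (θ_1,θ_2,θ_3) ∈ Δ_2 strictly positive and θ̃_1 ∈ (0,1), among all strictly positive Q ∈ Δ_2 with first coordinate equal to θ̃_1, the I-divergence D(Q||P) is uniquely minimized at Q = (θ̃_1, θ_2(1−θ̃_1)/(1−θ_1), θ_3(1−θ̃_1)/(1−θ_1)). -/

import Mathlib

/-- I-divergence (Kullback-Leibler divergence) on a finite set. -/
noncomputable def kl {Y : Type*} [Fintype Y] (Q P : Y → ℝ) : ℝ :=
  ∑ y, Q y * Real.log (Q y / P y)

lemma gibbs_le (a b : ℝ) (ha : 0 < a) (hb : 0 < b) :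
    a - b ≤ a * Real.log (a / b) := by
  have h : Real.log (b / a) ≤ b / a - 1 := Real.log_le_sub_one_of_pos (by positivity)
  have hinv : Real.log (a / b) = -Real.log (b / a) := by
    rw [← Real.log_inv]; congr 1; field_simp
  have hba : a * (b / a) = b := by field_simp
  nlinarith [mul_le_mul_of_nonneg_left h ha.le]

lemma gibbs_lt (a b : ℝ) (ha : 0 < a) (hb : 0 < b) (hab : a ≠ b) :
    a - b < a * Real.log (a / b) := by
  have hne : b / a ≠ 1 := by
    intro h
    exact hab (by field_simp at h; linarith)
  have h : Real.log (b / a) < b / a - 1 := Real.log_lt_sub_one_of_pos (by positivity) hne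
  have hinv : Real.log (a / b) = -Real.log (b / a) := by
    rw [← Real.log_inv]; congr 1; field_simp
  have hba : a * (b / a) = b := by field_simp
  nlinarith [mul_lt_mul_of_pos_left h ha]

theorem stmt8 (θ1 θ2 θ3 : ℝ) (hθ1 : 0 < θ1) (hθ2 : 0 < θ2) (hθ3 : 0 < θ3)
    (hθs : θ1 + θ2 + θ3 = 1)
    (t : ℝ) (ht0 : 0 < t) (ht1 : t < 1) :
    ∀ q2 q3 : ℝ, 0 < q2 → 0 < q3 → t + q2 + q3 = 1 →
      (kl ![t, θ2 * (1 - t) / (1 - θ1), θ3 * (1 - t) / (1 - θ1)] ![θ1, θ2, θ3] ≤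
          kl ![t, q2, q3] ![θ1, θ2, θ3]) ∧
        (kl ![t, q2, q3] ![θ1, θ2, θ3] =
            kl ![t, θ2 * (1 - t) / (1 - θ1), θ3 * (1 - t) / (1 - θ1)] ![θ1, θ2, θ3] →
          q2 = θ2 * (1 - t) / (1 - θ1) ∧ q3 = θ3 * (1 - t) / (1 - θ1)) := by
  intro q2 q3 hq2 hq3 hsum
  have hθ1' : θ1 < 1 := by linarith
  have h1θ : (0:ℝ) < 1 - θ1 := by linarith
  have h1t : (0:ℝ) < 1 - t := by linarith
  set c : ℝ := (1 - t) / (1 - θ1) with hc_def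
  have hc : 0 < c := by positivity
  have hb2 : 0 < θ2 * c := by positivity
  have hb3 : 0 < θ3 * c := by positivity
  have hbsum : θ2 * c + θ3 * c = 1 - t := by
    have : θ2 + θ3 = 1 - θ1 := by linarith
    field_simp [hc_def]
    rw [this, hc_def]; field_simp
  have heq2 : θ2 * (1 - t) / (1 - θ1) = θ2 * c := by rw [hc_def]; ring
  have heq3 : θ3 * (1 - t) / (1 - θ1) = θ3 * c := by rw [hc_def]; ring
  have hd2 : θ2 * c / θ2 = c := by field_simp
  have hd3 : θ3 * c / θ3 = c := by field_simp
  -- log splitting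
  have hs2 : Real.log (q2 / θ2) = Real.log (q2 / (θ2 * c)) + Real.log c := by
    rw [← Real.log_mul (by positivity) (ne_of_gt hc)]
    congr 1; field_simp
  have hs3 : Real.log (q3 / θ3) = Real.log (q3 / (θ3 * c)) + Real.log c := by
    rw [← Real.log_mul (by positivity) (ne_of_gt hc)]
    congr 1; field_simp
  have hg2 := gibbs_le q2 (θ2 * c) hq2 hb2
  have hg3 := gibbs_le q3 (θ3 * c) hq3 hb3
  have hq23 : q2 + q3 = θ2 * c + θ3 * c := by linarith
  have hlogc : q2 * Real.log c + q3 * Real.log c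
      = θ2 * c * Real.log c + θ3 * c * Real.log c := by
    rw [← add_mul, ← add_mul, hq23]
  have hklA : kl ![t, θ2 * (1 - t) / (1 - θ1), θ3 * (1 - t) / (1 - θ1)] ![θ1, θ2, θ3]
      = t * Real.log (t / θ1) + θ2 * c * Real.log c + θ3 * c * Real.log c := by
    simp only [kl, Fin.sum_univ_three, Matrix.cons_val_zero, Matrix.cons_val_one,
      Matrix.head_cons, Matrix.cons_val_two, Matrix.tail_cons]
    rw [heq2, heq3, hd2, hd3]
  have hklB : kl ![t, q2, q3] ![θ1, θ2, θ3]
      = t * Real.log (t / θ1) + q2 * Real.log (q2 / θ2) + q3 * Real.log (q3 / θ3) := by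
    simp only [kl, Fin.sum_univ_three, Matrix.cons_val_zero, Matrix.cons_val_one,
      Matrix.head_cons, Matrix.cons_val_two, Matrix.tail_cons]
  constructor
  · rw [hklA, hklB, hs2, hs3]
    have e2 : q2 * (Real.log (q2 / (θ2 * c)) + Real.log c)
        = q2 * Real.log (q2 / (θ2 * c)) + q2 * Real.log c := by ring
    have e3 : q3 * (Real.log (q3 / (θ3 * c)) + Real.log c)
        = q3 * Real.log (q3 / (θ3 * c)) + q3 * Real.log c := by ring
    rw [e2, e3]
    linarith
  · intro heq
    by_cases h2 : q2 = θ2 * c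
    · have h3 : q3 = θ3 * c := by linarith
      exact ⟨by rw [heq2, h2], by rw [heq3, h3]⟩
    · exfalso
      have hg2' := gibbs_lt q2 (θ2 * c) hq2 hb2 h2
      rw [hklA, hklB, hs2, hs3] at heq
      have e2 : q2 * (Real.log (q2 / (θ2 * c)) + Real.log c)
          = q2 * Real.log (q2 / (θ2 * c)) + q2 * Real.log c := by ring
      have e3 : q3 * (Real.log (q3 / (θ3 * c)) + Real.log c)
          = q3 * Real.log (q3 / (θ3 * c)) + q3 * Real.log c := by ring
      rw [e2, e3] at heq
      linarith
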